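/- arXiv:1507.08690 — 6 statements merged into one kernel-verified Lean document; each statement's English description precedes it below -/
import Mathlib

section
/- Let n ≥ 2 be an even integer, let x_1, …, x_n be positive integers, and let t be a positive integer. Then there exists a path in the hour-glass structure built from x_1, …, x_n whose sum equals t if and only if there exists a subset S' ⊆ {1, …, n} with ∑_{i ∈ S'} x_i = t. -/
/-- A cell `(r, c)` of the hour-glass structure (with parameter `n`) is valid if
`c ≡ r (mod 2)` and `|c - n| ≤ |r - n|`. -/
def HGValid (n r : ℕ) (c : ℤ) : Prop :=
  c % 2 = (r : ℤ) % 2 ∧ |c - (n : ℤ)| ≤ |(r : ℤ) - (n : ℤ)|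

/-- The value of the cell `(r, c)`: it is `x i` when `r = 2*i - 1` for some
`i ∈ {1, …, n}` (i.e. `r` is odd, `1 ≤ r ≤ 2n-1`, and `i = (r+1)/2`) and `c = n - 1`;
otherwise it is `0`. -/
def hgValue (n : ℕ) (x : ℕ → ℕ) (r : ℕ) (c : ℤ) : ℕ :=
  if r % 2 = 1 ∧ 1 ≤ r ∧ r ≤ 2 * n - 1 ∧ c = (n : ℤ) - 1 then x ((r + 1) / 2) else 0

/-- A path assigns to every row `r ∈ {1, …, 2n-1}` a column `c r` such that each
cell `(r, c r)` is valid and consecutive columns differ by exactly `1`. -/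
def IsHGPath (n : ℕ) (c : ℕ → ℤ) : Prop :=
  (∀ r, 1 ≤ r → r ≤ 2 * n - 1 → HGValid n r (c r)) ∧
  (∀ r, 1 ≤ r → r < 2 * n - 1 → |c (r + 1) - c r| = 1)

/-- The sum of the values along a path. -/
def hgSum (n : ℕ) (x : ℕ → ℕ) (c : ℕ → ℤ) : ℕ :=
  ∑ r ∈ Finset.Icc 1 (2 * n - 1), hgValue n x r (c r)

lemma hgSum_eq (n : ℕ) (x : ℕ → ℕ) (c : ℕ → ℤ) :
    hgSum n x c = ∑ i ∈ Finset.Icc 1 n, if c (2 * i - 1) = (n : ℤ) - 1 then x i else 0 := by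
  unfold hgSum
  rw [← Finset.sum_filter_of_ne (p := fun r => r % 2 = 1)
    (by intro r hr h; by_contra hodd; simp [hgValue, hodd] at h)]
  refine Finset.sum_nbij' (i := fun r => (r + 1) / 2) (j := fun i => 2 * i - 1) ?_ ?_ ?_ ?_ ?_
  · intro r hr
    simp only [Finset.mem_filter, Finset.mem_Icc] at *
    omega
  · intro i hi
    simp only [Finset.mem_filter, Finset.mem_Icc] at *
    omega
  · intro r hr
    simp only [Finset.mem_filter, Finset.mem_Icc] at hr
    omega
  · intro i hi
    simp only [Finset.mem_Icc] at hi
    omega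
  · intro r hr
    simp only [Finset.mem_filter, Finset.mem_Icc] at hr
    have h1 : 2 * ((r + 1) / 2) - 1 = r := by omega
    rw [h1]
    unfold hgValue
    by_cases h : c r = (n : ℤ) - 1
    · simp [h, hr.1.1, hr.1.2, hr.2]
    · simp [h]

/-- For even `n ≥ 2`, positive integers `x₁, …, xₙ` and a positive
target `t`, there is a path in the hour-glass structure whose sum equals `t`
iff some subset `S' ⊆ {1, …, n}` satisfies `∑_{i ∈ S'} x i = t`. -/
theorem hourglass_path_iff_subset_sum
    (n : ℕ) (hn : 2 ≤ n) (hneven : Even n)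
    (x : ℕ → ℕ) (hx : ∀ i, 1 ≤ i → i ≤ n → 0 < x i)
    (t : ℕ) (ht : 0 < t) :
    (∃ c : ℕ → ℤ, IsHGPath n c ∧ hgSum n x c = t) ↔
      (∃ S' ⊆ Finset.Icc 1 n, ∑ i ∈ S', x i = t) := by
  constructor
  · rintro ⟨c, -, hsum⟩
    refine ⟨(Finset.Icc 1 n).filter (fun i => c (2 * i - 1) = (n : ℤ) - 1),
      Finset.filter_subset _ _, ?_⟩
    rw [Finset.sum_filter, ← hgSum_eq n x c, hsum]
  · rintro ⟨S', hS', hsum⟩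
    obtain ⟨m, hm⟩ := hneven
    classical
    refine ⟨fun r => if r % 2 = 0 then (n : ℤ) else
      (if (r + 1) / 2 ∈ S' then (n : ℤ) - 1 else (n : ℤ) + 1), ⟨?_, ?_⟩, ?_⟩
    · intro r hr1 hr2
      constructor
      · by_cases h : r % 2 = 0 <;> simp only [h, if_true, if_false, reduceIte] <;> omega
      · by_cases h : r % 2 = 0
        · simp only [h, reduceIte, sub_self, abs_zero]
          exact abs_nonneg _
        · have hrn : r ≠ n := by omega
          have h1 : (1 : ℤ) ≤ |(r : ℤ) - (n : ℤ)| := by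
            refine Int.one_le_abs ?_
            omega
          simp only [h, reduceIte]
          by_cases h2 : (r + 1) / 2 ∈ S'
          · simp only [h2, reduceIte, show (n : ℤ) - 1 - n = -1 by ring]
            simpa using h1
          · simp only [h2, reduceIte, show (n : ℤ) + 1 - n = 1 by ring]
            simpa using h1
    · intro r hr1 hr2
      by_cases h : r % 2 = 0
      · have h1 : (r + 1) % 2 = 1 := by omega
        simp only [h, h1, reduceIte]
        by_cases h2 : (r + 1 + 1) / 2 ∈ S' <;> simp [h2] <;> ring_nf <;> norm_num
      · have h1 : (r + 1) % 2 = 0 := by omega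
        simp only [h, h1, reduceIte]
        by_cases h2 : (r + 1) / 2 ∈ S' <;> simp [h2] <;> ring_nf <;> norm_num
    · rw [hgSum_eq, ← hsum]
      rw [show (∑ i ∈ S', x i) = ∑ i ∈ Finset.Icc 1 n, if i ∈ S' then x i else 0 by
        rw [Finset.sum_ite_mem, Finset.inter_eq_right.mpr hS']]
      refine Finset.sum_congr rfl fun i hi => ?_
      simp only [Finset.mem_Icc] at hi
      rw [if_neg (show ¬ (2 * i - 1) % 2 = 0 by omega),
        show (2 * i - 1 + 1) / 2 = i by omega]
      by_cases h3 : i ∈ S'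
      · simp [h3]
      · simp only [h3, if_false, reduceIte]
        rw [if_neg (by omega : ¬ ((n:ℤ) + 1 = (n:ℤ) - 1))]
end

section
/- Let n ≥ 2 be an even integer and let x_1, …, x_n be positive integers. For every subset S' ⊆ {1, …, n} there exists a path in the hour-glass structure built from x_1, …, x_n whose sum equals ∑_{i ∈ S'} x_i; explicitly, the assignment c_{2i−1} = n−1 for i ∈ S', c_{2i−1} = n+1 for i ∉ S', and c_{2i} = n for all even rows 2i, is such a path. -/
/-- For every subset `S' ⊆ {1, …, n}` the explicit assignment
`c (2i-1) = n-1` for `i ∈ S'`, `c (2i-1) = n+1` for `i ∉ S'`, and `c (2i) = n`,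
is a path of the hour-glass structure whose sum is `∑_{i ∈ S'} x i`. -/
theorem hourglass_explicit_path_of_subset
    (n : ℕ) (hn : 2 ≤ n) (hneven : Even n)
    (x : ℕ → ℕ) (hx : ∀ i, 1 ≤ i → i ≤ n → 0 < x i)
    (S' : Finset ℕ) (hS' : S' ⊆ Finset.Icc 1 n)
    (c : ℕ → ℤ)
    (hc : c = fun r => if r % 2 = 1 then
        (if (r + 1) / 2 ∈ S' then (n : ℤ) - 1 else (n : ℤ) + 1)
      else (n : ℤ)) :
    IsHGPath n c ∧ hgSum n x c = ∑ i ∈ S', x i := by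
  subst hc
  have hn2 : n % 2 = 0 := Nat.even_iff.mp hneven
  constructor
  · constructor
    · intro r h1 h2
      by_cases hr : r % 2 = 1
      · refine ⟨?_, ?_⟩
        · simp only [hr, if_pos]
          split_ifs <;> omega
        · simp only [hr, if_pos]
          have habs : 1 ≤ |(r : ℤ) - (n : ℤ)| := by
            rcases abs_cases ((r : ℤ) - (n : ℤ)) with ⟨h, _⟩ | ⟨h, _⟩ <;> omega
          split_ifs
          · have : |(n : ℤ) - 1 - (n : ℤ)| = 1 := by norm_num
            omega
          · have : |(n : ℤ) + 1 - (n : ℤ)| = 1 := by norm_num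
            omega
      · refine ⟨?_, ?_⟩
        · simp only [hr, if_neg, if_false]
          omega
        · simp only [hr, if_false]
          have : |(n : ℤ) - (n : ℤ)| = 0 := by norm_num
          have := abs_nonneg ((r : ℤ) - (n : ℤ))
          omega
    · intro r h1 h2
      by_cases hr : r % 2 = 1
      · have hr1 : ¬ (r + 1) % 2 = 1 := by omega
        show |(if (r + 1) % 2 = 1 then _ else ((n : ℤ))) -
          (if r % 2 = 1 then _ else ((n : ℤ)))| = 1
        rw [if_neg hr1, if_pos hr]
        split_ifs
        · rw [show (n : ℤ) - ((n : ℤ) - 1) = 1 by ring]; norm_num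
        · rw [show (n : ℤ) - ((n : ℤ) + 1) = -1 by ring]; norm_num
      · have hr1 : (r + 1) % 2 = 1 := by omega
        show |(if (r + 1) % 2 = 1 then _ else ((n : ℤ))) -
          (if r % 2 = 1 then _ else ((n : ℤ)))| = 1
        rw [if_pos hr1, if_neg hr]
        split_ifs
        · rw [show (n : ℤ) - 1 - (n : ℤ) = -1 by ring]; norm_num
        · rw [show (n : ℤ) + 1 - (n : ℤ) = 1 by ring]; norm_num
  · unfold hgSum
    have himg : (Finset.Icc 1 n).image (fun i => 2 * i - 1) ⊆ Finset.Icc 1 (2 * n - 1) := by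
      intro r hr
      simp only [Finset.mem_image, Finset.mem_Icc] at hr ⊢
      obtain ⟨i, hi, rfl⟩ := hr
      omega
    rw [← Finset.sum_subset himg (by
      intro r hr hnot
      unfold hgValue
      rw [if_neg]
      rintro ⟨ho, hl, hu, _⟩
      exact hnot (Finset.mem_image.mpr ⟨(r + 1) / 2, Finset.mem_Icc.mpr (by omega), by omega⟩))]
    rw [Finset.sum_image (by intro a ha b hb h; simp only [Finset.mem_coe, Finset.mem_Icc] at ha hb h; omega)]
    have hcongr : ∀ i ∈ Finset.Icc 1 n,
        hgValue n x (2 * i - 1) ((fun r => if r % 2 = 1 then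
          (if (r + 1) / 2 ∈ S' then (n : ℤ) - 1 else (n : ℤ) + 1)
          else (n : ℤ)) (2 * i - 1)) = if i ∈ S' then x i else 0 := by
      intro i hi
      simp only [Finset.mem_Icc] at hi
      have hmod : (2 * i - 1) % 2 = 1 := by omega
      have hdiv : (2 * i - 1 + 1) / 2 = i := by omega
      have hcval : (fun r => if r % 2 = 1 then
          (if (r + 1) / 2 ∈ S' then (n : ℤ) - 1 else (n : ℤ) + 1)
          else (n : ℤ)) (2 * i - 1) = if i ∈ S' then (n : ℤ) - 1 else (n : ℤ) + 1 := by
        simp only [hmod, hdiv, if_true]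
      rw [hcval]
      unfold hgValue
      by_cases h : i ∈ S'
      · simp only [h, if_true]
        rw [if_pos ⟨hmod, by omega, by omega, trivial⟩, hdiv]
      · simp only [h, if_false]
        rw [if_neg]
        rintro ⟨_, _, _, habs⟩
        omega
    rw [Finset.sum_congr rfl hcongr, Finset.sum_ite_mem,
      Finset.inter_eq_right.mpr hS']
end

section
/- Let n ≥ 2 be an even integer and let x_1, …, x_n be positive integers. For every path c in the hour-glass structure built from x_1, …, x_n, the sum of the path equals ∑_{i ∈ S'} x_i, where S' = { i ∈ {1, …, n} : c_{2i−1} = n−1 }. In particular, if some path has sum t, then some subset of {x_1, …, x_n} sums to t. -/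
/-- Every path in the hour-glass structure has sum
`∑_{i ∈ S'} x i` where `S' = { i ∈ {1, …, n} : c (2i-1) = n-1 }`; in particular,
if some path has sum `t` then some subset of `{1, …, n}` has `x`-sum `t`. -/
theorem hourglass_path_sum_eq_subset_sum
    (n : ℕ) (hn : 2 ≤ n) (hneven : Even n)
    (x : ℕ → ℕ) (hx : ∀ i, 1 ≤ i → i ≤ n → 0 < x i) :
    (∀ c : ℕ → ℤ, IsHGPath n c →
        hgSum n x c =
          ∑ i ∈ (Finset.Icc 1 n).filter (fun i => c (2 * i - 1) = (n : ℤ) - 1), x i) ∧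
    (∀ t : ℕ, (∃ c : ℕ → ℤ, IsHGPath n c ∧ hgSum n x c = t) →
        ∃ S' ⊆ Finset.Icc 1 n, ∑ i ∈ S', x i = t) := by
  have key : ∀ c : ℕ → ℤ, IsHGPath n c →
      hgSum n x c =
        ∑ i ∈ (Finset.Icc 1 n).filter (fun i => c (2 * i - 1) = (n : ℤ) - 1), x i := by
    intro c _
    have h1 : hgSum n x c =
        ∑ r ∈ (Finset.Icc 1 (2 * n - 1)).filter (fun r => r % 2 = 1),
          hgValue n x r (c r) := by
      rw [hgSum, Finset.sum_filter_of_ne]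
      intro r _ hne
      by_contra hodd
      apply hne
      unfold hgValue
      rw [if_neg]
      tauto
    have h2 : ∑ r ∈ (Finset.Icc 1 (2 * n - 1)).filter (fun r => r % 2 = 1),
          hgValue n x r (c r) =
        ∑ i ∈ Finset.Icc 1 n, hgValue n x (2 * i - 1) (c (2 * i - 1)) := by
      apply Finset.sum_nbij' (fun r => (r + 1) / 2) (fun i => 2 * i - 1)
      · intro r hr
        simp only [Finset.mem_filter, Finset.mem_Icc] at hr ⊢
        omega
      · intro i hi
        simp only [Finset.mem_filter, Finset.mem_Icc] at hi ⊢
        omega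
      · intro r hr
        simp only [Finset.mem_filter, Finset.mem_Icc] at hr
        omega
      · intro i hi
        simp only [Finset.mem_Icc] at hi
        omega
      · intro r hr
        simp only [Finset.mem_filter, Finset.mem_Icc] at hr
        have hr2 : 2 * ((r + 1) / 2) - 1 = r := by omega
        rw [hr2]
    have h3 : ∀ i ∈ Finset.Icc 1 n,
        hgValue n x (2 * i - 1) (c (2 * i - 1)) =
          if c (2 * i - 1) = (n : ℤ) - 1 then x i else 0 := by
      intro i hi
      simp only [Finset.mem_Icc] at hi
      unfold hgValue
      have e1 : (2 * i - 1) % 2 = 1 := by omega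
      have e2 : 1 ≤ 2 * i - 1 := by omega
      have e3 : 2 * i - 1 ≤ 2 * n - 1 := by omega
      have e4 : (2 * i - 1 + 1) / 2 = i := by omega
      rw [e4]
      by_cases hc : c (2 * i - 1) = (n : ℤ) - 1
      · rw [if_pos ⟨e1, e2, e3, hc⟩, if_pos hc]
      · rw [if_neg (by tauto), if_neg hc]
    rw [h1, h2, Finset.sum_congr rfl h3, ← Finset.sum_filter]
  refine ⟨key, ?_⟩
  rintro t ⟨c, hc, hsum⟩
  exact ⟨_, Finset.filter_subset _ _, by rw [← key c hc, hsum]⟩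
end

section
/- A finite nonempty connected set S ⊆ ℤ × ℤ has perimeter 6 if and only if S consists of exactly two adjacent cells (a domino). -/
/-- Two cells of `ℤ × ℤ` are adjacent if `|c₁ - d₁| + |c₂ - d₂| = 1`. -/
def Adj (c d : ℤ × ℤ) : Prop :=
  |c.1 - d.1| + |c.2 - d.2| = 1

/-- The perimeter of a finite set `S ⊆ ℤ × ℤ`: the number of ordered pairs
`(c, d)` with `c ∈ S`, `d ∉ S`, and `c, d` adjacent. -/
noncomputable def perimeter (S : Finset (ℤ × ℤ)) : ℕ :=
  Set.ncard {p : (ℤ × ℤ) × (ℤ × ℤ) | p.1 ∈ S ∧ p.2 ∉ S ∧ Adj p.1 p.2}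

/-- A finite set `S ⊆ ℤ × ℤ` is connected if any two of its cells are joined by a
finite sequence of cells of `S` in which consecutive cells are adjacent. -/
def Conn (S : Finset (ℤ × ℤ)) : Prop :=
  ∀ a ∈ S, ∀ b ∈ S, ∃ (k : ℕ) (f : ℕ → ℤ × ℤ),
    f 0 = a ∧ f k = b ∧ (∀ i ≤ k, f i ∈ S) ∧ ∀ i < k, Adj (f i) (f (i + 1))

/-! ### Auxiliary development -/

def dirs : Finset (ℤ × ℤ) := {(1,0), (-1,0), (0,1), (0,-1)}

lemma mem_dirs {v : ℤ × ℤ} : v ∈ dirs ↔ v = (1,0) ∨ v = (-1,0) ∨ v = (0,1) ∨ v = (0,-1) := by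
  simp [dirs]

lemma dirs_card : dirs.card = 4 := by decide

lemma adj_iff (c d : ℤ × ℤ) : Adj c d ↔ d - c ∈ dirs := by
  rw [mem_dirs]
  show |c.1 - d.1| + |c.2 - d.2| = 1 ↔ _
  simp only [Prod.ext_iff, Prod.fst_sub, Prod.snd_sub]
  rcases abs_cases (c.1 - d.1) with ⟨h1, h1'⟩ | ⟨h1, h1'⟩ <;>
    rcases abs_cases (c.2 - d.2) with ⟨h2, h2'⟩ | ⟨h2, h2'⟩ <;>
      rw [h1, h2] <;> omega

lemma adj_symm {c d : ℤ × ℤ} (h : Adj c d) : Adj d c := by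
  unfold Adj at *
  rw [abs_sub_comm d.1 c.1, abs_sub_comm d.2 c.2]
  exact h

lemma ne_self_add_dirs {c v : ℤ × ℤ} (hv : v ∈ dirs) : c + v ≠ c := by
  rcases mem_dirs.mp hv with rfl | rfl | rfl | rfl <;>
    simp [Prod.ext_iff]

def E (S : Finset (ℤ × ℤ)) : Finset ((ℤ × ℤ) × (ℤ × ℤ)) :=
  (S ×ˢ dirs).filter fun q => q.1 + q.2 ∉ S

lemma perimeter_eq_card (S : Finset (ℤ × ℤ)) : perimeter S = (E S).card := by
  have hinj : Function.Injective fun q : (ℤ × ℤ) × (ℤ × ℤ) => (q.1, q.1 + q.2) := by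
    intro a b h
    simp only [Prod.mk.injEq] at h
    obtain ⟨h1, h2⟩ := h
    rw [h1] at h2
    exact Prod.ext h1 (add_left_cancel h2)
  have hset : {p : (ℤ × ℤ) × (ℤ × ℤ) | p.1 ∈ S ∧ p.2 ∉ S ∧ Adj p.1 p.2}
      = ↑((E S).image fun q => (q.1, q.1 + q.2)) := by
    ext p
    simp only [Set.mem_setOf_eq, Finset.coe_image, Set.mem_image, Finset.mem_coe, E,
      Finset.mem_filter, Finset.mem_product]
    constructor
    · rintro ⟨h1, h2, h3⟩
      refine ⟨(p.1, p.2 - p.1), ⟨⟨h1, (adj_iff _ _).mp h3⟩, ?_⟩, ?_⟩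
      · simpa using h2
      · simp
    · rintro ⟨q, ⟨⟨hq1, hqd⟩, hq2⟩, rfl⟩
      exact ⟨hq1, hq2, (adj_iff _ _).mpr (by simpa using hqd)⟩
  rw [perimeter, hset, Set.ncard_coe_finset, Finset.card_image_of_injective _ hinj]

lemma card_E_sum (S : Finset (ℤ × ℤ)) :
    (E S).card = ∑ c ∈ S, (dirs.filter fun v => c + v ∉ S).card := by
  have hE : E S = S.biUnion fun c => (dirs.filter fun v => c + v ∉ S).image (Prod.mk c) := by
    ext ⟨a, v⟩
    simp only [E, Finset.mem_filter, Finset.mem_product, Finset.mem_biUnion, Finset.mem_image,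
      Prod.mk.injEq]
    constructor
    · rintro ⟨⟨ha, hv⟩, h⟩
      exact ⟨a, ha, v, ⟨hv, h⟩, rfl, rfl⟩
    · rintro ⟨c, hc, w, ⟨hw, hw2⟩, rfl, rfl⟩
      exact ⟨⟨hc, hw⟩, hw2⟩
  rw [hE, Finset.card_biUnion]
  · exact Finset.sum_congr rfl fun c _ =>
      Finset.card_image_of_injective _ (fun x y h => by simpa using h)
  · intro c _ c' _ hcc
    rw [Function.onFun, Finset.disjoint_left]
    rintro a ha ha'
    obtain ⟨w, _, rfl⟩ := Finset.mem_image.mp ha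
    obtain ⟨w', _, h⟩ := Finset.mem_image.mp ha'
    exact hcc (congrArg Prod.fst h).symm

lemma filter_singleton_card (c : ℤ × ℤ) :
    (dirs.filter fun v => c + v ∉ ({c} : Finset (ℤ × ℤ))).card = 4 := by
  rw [Finset.filter_true_of_mem, dirs_card]
  intro v hv
  simp only [Finset.mem_singleton]
  exact ne_self_add_dirs hv

lemma filter_pair_subset (c d : ℤ × ℤ) :
    (dirs.filter fun v => c + v ∈ ({c, d} : Finset (ℤ × ℤ))) ⊆ {d - c} := by
  intro v hv
  simp only [Finset.mem_filter, Finset.mem_insert, Finset.mem_singleton] at hv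
  obtain ⟨hvd, h | h⟩ := hv
  · exact absurd h (ne_self_add_dirs hvd)
  · simp only [Finset.mem_singleton]
    rw [← h]; ring

lemma filter_pair_card {c d : ℤ × ℤ} (h : Adj c d) :
    (dirs.filter fun v => c + v ∈ ({c, d} : Finset (ℤ × ℤ))).card = 1 := by
  have heq : (dirs.filter fun v => c + v ∈ ({c, d} : Finset (ℤ × ℤ))) = {d - c} := by
    refine Finset.Subset.antisymm (filter_pair_subset c d) ?_
    rw [Finset.singleton_subset_iff, Finset.mem_filter]
    refine ⟨(adj_iff c d).mp h, ?_⟩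
    simp only [Finset.mem_insert, Finset.mem_singleton]
    right; ring
  rw [heq, Finset.card_singleton]

lemma filter_pair_compl_card {c d a : ℤ × ℤ}
    (h1 : (dirs.filter fun v => a + v ∈ ({c, d} : Finset (ℤ × ℤ))).card = 1) :
    (dirs.filter fun v => a + v ∉ ({c, d} : Finset (ℤ × ℤ))).card = 3 := by
  have := Finset.card_filter_add_card_filter_not
    (s := dirs) (p := fun v => a + v ∈ ({c, d} : Finset (ℤ × ℤ)))
  rw [dirs_card, h1] at this
  omega

noncomputable def rmin (S : Finset (ℤ × ℤ)) (y : ℤ) : ℤ :=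
  if h : ((S.filter fun c => c.2 = y).image Prod.fst).Nonempty
  then ((S.filter fun c => c.2 = y).image Prod.fst).min' h else 0

noncomputable def rmax (S : Finset (ℤ × ℤ)) (y : ℤ) : ℤ :=
  if h : ((S.filter fun c => c.2 = y).image Prod.fst).Nonempty
  then ((S.filter fun c => c.2 = y).image Prod.fst).max' h else 0

noncomputable def cmin (S : Finset (ℤ × ℤ)) (x : ℤ) : ℤ :=
  if h : ((S.filter fun c => c.1 = x).image Prod.snd).Nonempty
  then ((S.filter fun c => c.1 = x).image Prod.snd).min' h else 0

noncomputable def cmax (S : Finset (ℤ × ℤ)) (x : ℤ) : ℤ :=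
  if h : ((S.filter fun c => c.1 = x).image Prod.snd).Nonempty
  then ((S.filter fun c => c.1 = x).image Prod.snd).max' h else 0

lemma rmin_spec {S : Finset (ℤ × ℤ)} {y : ℤ} (hy : y ∈ S.image Prod.snd) :
    (rmin S y, y) ∈ S ∧ ∀ c ∈ S, c.2 = y → rmin S y ≤ c.1 := by
  obtain ⟨c0, hc0, hc0y⟩ := Finset.mem_image.mp hy
  have hne : ((S.filter fun c => c.2 = y).image Prod.fst).Nonempty :=
    ⟨c0.1, Finset.mem_image.mpr ⟨c0, Finset.mem_filter.mpr ⟨hc0, hc0y⟩, rfl⟩⟩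
  rw [rmin, dif_pos hne]
  constructor
  · obtain ⟨c, hc, hceq⟩ := Finset.mem_image.mp (Finset.min'_mem _ hne)
    obtain ⟨hcS, hcy⟩ := Finset.mem_filter.mp hc
    have : ((_ : Finset _).min' hne, y) = c := Prod.ext hceq.symm hcy.symm
    rw [this]; exact hcS
  · intro c hc hcy
    exact Finset.min'_le _ _ (Finset.mem_image.mpr ⟨c, Finset.mem_filter.mpr ⟨hc, hcy⟩, rfl⟩)

lemma rmax_spec {S : Finset (ℤ × ℤ)} {y : ℤ} (hy : y ∈ S.image Prod.snd) :
    (rmax S y, y) ∈ S ∧ ∀ c ∈ S, c.2 = y → c.1 ≤ rmax S y := by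
  obtain ⟨c0, hc0, hc0y⟩ := Finset.mem_image.mp hy
  have hne : ((S.filter fun c => c.2 = y).image Prod.fst).Nonempty :=
    ⟨c0.1, Finset.mem_image.mpr ⟨c0, Finset.mem_filter.mpr ⟨hc0, hc0y⟩, rfl⟩⟩
  rw [rmax, dif_pos hne]
  constructor
  · obtain ⟨c, hc, hceq⟩ := Finset.mem_image.mp (Finset.max'_mem _ hne)
    obtain ⟨hcS, hcy⟩ := Finset.mem_filter.mp hc
    have : ((_ : Finset _).max' hne, y) = c := Prod.ext hceq.symm hcy.symm
    rw [this]; exact hcS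
  · intro c hc hcy
    exact Finset.le_max' _ _ (Finset.mem_image.mpr ⟨c, Finset.mem_filter.mpr ⟨hc, hcy⟩, rfl⟩)

lemma cmin_spec {S : Finset (ℤ × ℤ)} {x : ℤ} (hx : x ∈ S.image Prod.fst) :
    (x, cmin S x) ∈ S ∧ ∀ c ∈ S, c.1 = x → cmin S x ≤ c.2 := by
  obtain ⟨c0, hc0, hc0x⟩ := Finset.mem_image.mp hx
  have hne : ((S.filter fun c => c.1 = x).image Prod.snd).Nonempty :=
    ⟨c0.2, Finset.mem_image.mpr ⟨c0, Finset.mem_filter.mpr ⟨hc0, hc0x⟩, rfl⟩⟩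
  rw [cmin, dif_pos hne]
  constructor
  · obtain ⟨c, hc, hceq⟩ := Finset.mem_image.mp (Finset.min'_mem _ hne)
    obtain ⟨hcS, hcx⟩ := Finset.mem_filter.mp hc
    have : (x, (_ : Finset _).min' hne) = c := Prod.ext hcx.symm hceq.symm
    rw [this]; exact hcS
  · intro c hc hcx
    exact Finset.min'_le _ _ (Finset.mem_image.mpr ⟨c, Finset.mem_filter.mpr ⟨hc, hcx⟩, rfl⟩)

lemma cmax_spec {S : Finset (ℤ × ℤ)} {x : ℤ} (hx : x ∈ S.image Prod.fst) :
    (x, cmax S x) ∈ S ∧ ∀ c ∈ S, c.1 = x → c.2 ≤ cmax S x := by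
  obtain ⟨c0, hc0, hc0x⟩ := Finset.mem_image.mp hx
  have hne : ((S.filter fun c => c.1 = x).image Prod.snd).Nonempty :=
    ⟨c0.2, Finset.mem_image.mpr ⟨c0, Finset.mem_filter.mpr ⟨hc0, hc0x⟩, rfl⟩⟩
  rw [cmax, dif_pos hne]
  constructor
  · obtain ⟨c, hc, hceq⟩ := Finset.mem_image.mp (Finset.max'_mem _ hne)
    obtain ⟨hcS, hcx⟩ := Finset.mem_filter.mp hc
    have : (x, (_ : Finset _).max' hne) = c := Prod.ext hcx.symm hceq.symm
    rw [this]; exact hcS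
  · intro c hc hcx
    exact Finset.le_max' _ _ (Finset.mem_image.mpr ⟨c, Finset.mem_filter.mpr ⟨hc, hcx⟩, rfl⟩)

lemma lower_bound (S : Finset (ℤ × ℤ)) :
    2 * ((S.image Prod.snd).card + (S.image Prod.fst).card) ≤ (E S).card := by
  classical
  set R := S.image Prod.snd with hR
  set C := S.image Prod.fst with hC
  set A1 := R.image fun y => (((rmin S y, y) : ℤ × ℤ), ((-1, 0) : ℤ × ℤ)) with hA1
  set A2 := R.image fun y => (((rmax S y, y) : ℤ × ℤ), ((1, 0) : ℤ × ℤ)) with hA2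
  set A3 := C.image fun x => (((x, cmin S x) : ℤ × ℤ), ((0, -1) : ℤ × ℤ)) with hA3
  set A4 := C.image fun x => (((x, cmax S x) : ℤ × ℤ), ((0, 1) : ℤ × ℤ)) with hA4
  have hd1 : ∀ a ∈ A1, a.2 = ((-1, 0) : ℤ × ℤ) := by
    intro a ha; obtain ⟨y, _, rfl⟩ := Finset.mem_image.mp ha; rfl
  have hd2 : ∀ a ∈ A2, a.2 = ((1, 0) : ℤ × ℤ) := by
    intro a ha; obtain ⟨y, _, rfl⟩ := Finset.mem_image.mp ha; rfl
  have hd3 : ∀ a ∈ A3, a.2 = ((0, -1) : ℤ × ℤ) := by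
    intro a ha; obtain ⟨y, _, rfl⟩ := Finset.mem_image.mp ha; rfl
  have hd4 : ∀ a ∈ A4, a.2 = ((0, 1) : ℤ × ℤ) := by
    intro a ha; obtain ⟨y, _, rfl⟩ := Finset.mem_image.mp ha; rfl
  have hsub : A1 ∪ A2 ∪ A3 ∪ A4 ⊆ E S := by
    intro a ha
    simp only [Finset.mem_union] at ha
    rcases ha with ((ha | ha) | ha) | ha
    · obtain ⟨y, hy, rfl⟩ := Finset.mem_image.mp ha
      obtain ⟨hmem, hle⟩ := rmin_spec hy
      refine Finset.mem_filter.mpr ⟨Finset.mem_product.mpr ⟨hmem, by simp [mem_dirs]⟩, ?_⟩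
      intro hin
      have := hle _ hin (by simp)
      simp only [Prod.fst_add, Prod.snd_add] at this ⊢
      omega
    · obtain ⟨y, hy, rfl⟩ := Finset.mem_image.mp ha
      obtain ⟨hmem, hle⟩ := rmax_spec hy
      refine Finset.mem_filter.mpr ⟨Finset.mem_product.mpr ⟨hmem, by simp [mem_dirs]⟩, ?_⟩
      intro hin
      have := hle _ hin (by simp)
      simp only [Prod.fst_add, Prod.snd_add] at this ⊢
      omega
    · obtain ⟨x, hx, rfl⟩ := Finset.mem_image.mp ha
      obtain ⟨hmem, hle⟩ := cmin_spec hx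
      refine Finset.mem_filter.mpr ⟨Finset.mem_product.mpr ⟨hmem, by simp [mem_dirs]⟩, ?_⟩
      intro hin
      have := hle _ hin (by simp)
      simp only [Prod.fst_add, Prod.snd_add] at this ⊢
      omega
    · obtain ⟨x, hx, rfl⟩ := Finset.mem_image.mp ha
      obtain ⟨hmem, hle⟩ := cmax_spec hx
      refine Finset.mem_filter.mpr ⟨Finset.mem_product.mpr ⟨hmem, by simp [mem_dirs]⟩, ?_⟩
      intro hin
      have := hle _ hin (by simp)
      simp only [Prod.fst_add, Prod.snd_add] at this ⊢
      omega
  have hdisj : ∀ (A B : Finset ((ℤ × ℤ) × (ℤ × ℤ))) (u v : ℤ × ℤ), u ≠ v →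
      (∀ a ∈ A, a.2 = u) → (∀ a ∈ B, a.2 = v) → Disjoint A B := by
    intro A B u v huv hA hB
    rw [Finset.disjoint_left]
    intro a ha hb
    exact huv ((hA a ha).symm.trans (hB a hb))
  have d12 : Disjoint A1 A2 := hdisj _ _ _ _ (by simp [Prod.ext_iff]) hd1 hd2
  have d13 : Disjoint A1 A3 := hdisj _ _ _ _ (by simp [Prod.ext_iff]) hd1 hd3
  have d23 : Disjoint A2 A3 := hdisj _ _ _ _ (by simp [Prod.ext_iff]) hd2 hd3
  have d14 : Disjoint A1 A4 := hdisj _ _ _ _ (by simp [Prod.ext_iff]) hd1 hd4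
  have d24 : Disjoint A2 A4 := hdisj _ _ _ _ (by simp [Prod.ext_iff]) hd2 hd4
  have d34 : Disjoint A3 A4 := hdisj _ _ _ _ (by simp [Prod.ext_iff]) hd3 hd4
  have c1 : A1.card = R.card := Finset.card_image_of_injOn fun y _ y' _ h => by
    simpa using congrArg (fun p => p.1.2) h
  have c2 : A2.card = R.card := Finset.card_image_of_injOn fun y _ y' _ h => by
    simpa using congrArg (fun p => p.1.2) h
  have c3 : A3.card = C.card := Finset.card_image_of_injOn fun x _ x' _ h => by
    simpa using congrArg (fun p => p.1.1) h
  have c4 : A4.card = C.card := Finset.card_image_of_injOn fun x _ x' _ h => by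
    simpa using congrArg (fun p => p.1.1) h
  have hcard : (A1 ∪ A2 ∪ A3 ∪ A4).card = R.card + R.card + C.card + C.card := by
    rw [Finset.card_union_of_disjoint, Finset.card_union_of_disjoint,
      Finset.card_union_of_disjoint d12, c1, c2, c3, c4]
    · exact Finset.disjoint_union_left.mpr ⟨d13, d23⟩
    · exact Finset.disjoint_union_left.mpr ⟨Finset.disjoint_union_left.mpr ⟨d14, d24⟩, d34⟩
  have := Finset.card_le_card hsub
  omega

/-- A finite nonempty connected set has perimeter 6 iff it
consists of exactly two adjacent cells (a domino). -/
theorem perimeter_eq_six_iff_domino (S : Finset (ℤ × ℤ)) (hS : S.Nonempty)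
    (hconn : Conn S) :
    perimeter S = 6 ↔ ∃ c d : ℤ × ℤ, Adj c d ∧ S = {c, d} := by
  constructor
  · intro h6
    have hE6 : (E S).card = 6 := by rw [← perimeter_eq_card]; exact h6
    have hlow := lower_bound S
    have hRne : (S.image Prod.snd).Nonempty := hS.image _
    have hCne : (S.image Prod.fst).Nonempty := hS.image _
    have hR1 : 1 ≤ (S.image Prod.snd).card := Finset.card_pos.mpr hRne
    have hC1 : 1 ≤ (S.image Prod.fst).card := Finset.card_pos.mpr hCne
    have hsub : S ⊆ (S.image Prod.fst) ×ˢ (S.image Prod.snd) := fun c hc =>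
      Finset.mem_product.mpr ⟨Finset.mem_image_of_mem _ hc, Finset.mem_image_of_mem _ hc⟩
    have hScard : S.card ≤ (S.image Prod.fst).card * (S.image Prod.snd).card := by
      have := Finset.card_le_card hsub
      rwa [Finset.card_product] at this
    have hS2 : S.card ≤ 2 := by nlinarith [hE6 ▸ hlow]
    have hS1 : 1 ≤ S.card := Finset.card_pos.mpr hS
    rcases (by omega : S.card = 1 ∨ S.card = 2) with h | h
    · exfalso
      obtain ⟨c, rfl⟩ := Finset.card_eq_one.mp h
      rw [card_E_sum, Finset.sum_singleton, filter_singleton_card] at hE6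
      omega
    · obtain ⟨c, d, hcd, rfl⟩ := Finset.card_eq_two.mp h
      rw [card_E_sum, Finset.sum_pair hcd] at hE6
      have hgc := Finset.card_le_card (filter_pair_subset c d)
      have hgd := Finset.card_le_card (filter_pair_subset d c)
      rw [Finset.card_singleton] at hgc hgd
      have hfc := Finset.card_filter_add_card_filter_not
        (s := dirs) (p := fun v => c + v ∈ ({c, d} : Finset (ℤ × ℤ)))
      have hfd := Finset.card_filter_add_card_filter_not
        (s := dirs) (p := fun v => d + v ∈ ({c, d} : Finset (ℤ × ℤ)))
      rw [dirs_card] at hfc hfd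
      have hpair : ({d, c} : Finset (ℤ × ℤ)) = {c, d} := Finset.pair_comm d c
      rw [hpair] at hgd
      have hg1 : (dirs.filter fun v => c + v ∈ ({c, d} : Finset (ℤ × ℤ))).card = 1 := by
        omega
      have hne : (dirs.filter fun v => c + v ∈ ({c, d} : Finset (ℤ × ℤ))).Nonempty :=
        Finset.card_pos.mp (by omega)
      obtain ⟨v, hv⟩ := hne
      have hveq : v = d - c := Finset.mem_singleton.mp (filter_pair_subset c d hv)
      have hvd : v ∈ dirs := (Finset.mem_filter.mp hv).1
      exact ⟨c, d, (adj_iff c d).mpr (hveq ▸ hvd), rfl⟩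
  · rintro ⟨c, d, hadj, rfl⟩
    have hcd : c ≠ d := by
      intro h; subst h
      simp [Adj] at hadj
    rw [perimeter_eq_card, card_E_sum, Finset.sum_pair hcd]
    have h1 := filter_pair_compl_card (filter_pair_card hadj)
    have hadj' : Adj d c := adj_symm hadj
    have h2' := filter_pair_card hadj'
    rw [Finset.pair_comm d c] at h2'
    have h2 := filter_pair_compl_card h2'
    rw [h1, h2]
end

section
/- Let S ⊆ ℤ × ℤ be a finite nonempty connected set, and let w = max{c₁ : (c₁, c₂) ∈ S} − min{c₁ : (c₁, c₂) ∈ S} + 1 and h = max{c₂ : (c₁, c₂) ∈ S} − min{c₂ : (c₁, c₂) ∈ S} + 1 be the width and height of its bounding box. Then the perimeter of S is at least 2(w + h). In particular, a connected set containing two cells whose first coordinates differ by at least 8 has perimeter at least 20. -/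
lemma adj_cases {c d : ℤ × ℤ} (h : Adj c d) :
    d = c + (1,0) ∨ d = c + (-1,0) ∨ d = c + (0,1) ∨ d = c + (0,-1) := by
  obtain ⟨c1, c2⟩ := c; obtain ⟨d1, d2⟩ := d
  unfold Adj at h
  simp only [Prod.mk_add_mk, Prod.mk.injEq] at *
  rcases abs_cases (c1 - d1) with h1 | h1 <;> rcases abs_cases (c2 - d2) with h2 | h2 <;> omega

lemma adj_step {c d : ℤ × ℤ} (h : Adj c d) : |d.1 - c.1| ≤ 1 ∧ |d.2 - c.2| ≤ 1 := by
  unfold Adj at h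
  constructor <;> [rw [abs_sub_comm]; rw [abs_sub_comm]] <;>
    [exact le_trans (le_add_of_nonneg_right (abs_nonneg _)) h.le;
     exact le_trans (le_add_of_nonneg_left (abs_nonneg _)) h.le]

lemma adj_up (z t : ℤ) : Adj (z, t) (z, t + 1) := by simp [Adj]
lemma adj_down (z t : ℤ) : Adj (z, t) (z, t - 1) := by simp [Adj]
lemma adj_right (z t : ℤ) : Adj (t, z) (t + 1, z) := by simp [Adj]
lemma adj_left (z t : ℤ) : Adj (t, z) (t - 1, z) := by simp [Adj]

lemma ivt (g : ℕ → ℤ) (k : ℕ) (hstep : ∀ i < k, |g (i + 1) - g i| ≤ 1)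
    (x : ℤ) (h0 : g 0 ≤ x) (hk : x ≤ g k) : ∃ i ≤ k, g i = x := by
  classical
  let P : ℕ → Prop := fun i => g i ≤ x
  have hP0 : P 0 := h0
  have hjk : Nat.findGreatest P k ≤ k := Nat.findGreatest_le k
  have hPj : g (Nat.findGreatest P k) ≤ x := Nat.findGreatest_spec (Nat.zero_le k) hP0
  rcases eq_or_lt_of_le hjk with h | h
  · refine ⟨Nat.findGreatest P k, hjk, le_antisymm hPj ?_⟩; rw [h]; exact hk
  · have hnext : ¬ P (Nat.findGreatest P k + 1) :=
      Nat.findGreatest_is_greatest (lt_add_one _) (by omega)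
    have hnext' : x < g (Nat.findGreatest P k + 1) := not_le.mp hnext
    have hs := hstep (Nat.findGreatest P k) h
    refine ⟨Nat.findGreatest P k, hjk, ?_⟩
    rcases abs_cases (g (Nat.findGreatest P k + 1) - g (Nat.findGreatest P k)) with h1 | h1 <;> omega


noncomputable def colSet (S : Finset (ℤ × ℤ)) (x : ℤ) : Finset ℤ :=
  (S.filter fun c => c.1 = x).image Prod.snd

noncomputable def rowSet (S : Finset (ℤ × ℤ)) (y : ℤ) : Finset ℤ :=
  (S.filter fun c => c.2 = y).image Prod.fst

lemma mem_colSet {S : Finset (ℤ × ℤ)} {x y : ℤ} : y ∈ colSet S x ↔ (x, y) ∈ S := by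
  simp only [colSet, Finset.mem_image, Finset.mem_filter]
  constructor
  · rintro ⟨⟨a, b⟩, ⟨hm, rfl⟩, rfl⟩; exact hm
  · intro h; exact ⟨(x, y), ⟨h, rfl⟩, rfl⟩

lemma mem_rowSet {S : Finset (ℤ × ℤ)} {x y : ℤ} : x ∈ rowSet S y ↔ (x, y) ∈ S := by
  simp only [rowSet, Finset.mem_image, Finset.mem_filter]
  constructor
  · rintro ⟨⟨a, b⟩, ⟨hm, rfl⟩, rfl⟩; exact hm
  · intro h; exact ⟨(x, y), ⟨h, rfl⟩, rfl⟩

noncomputable def topY (S : Finset (ℤ × ℤ)) (x : ℤ) : ℤ :=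
  if h : (colSet S x).Nonempty then (colSet S x).max' h else 0

noncomputable def botY (S : Finset (ℤ × ℤ)) (x : ℤ) : ℤ :=
  if h : (colSet S x).Nonempty then (colSet S x).min' h else 0

noncomputable def rightX (S : Finset (ℤ × ℤ)) (y : ℤ) : ℤ :=
  if h : (rowSet S y).Nonempty then (rowSet S y).max' h else 0

noncomputable def leftX (S : Finset (ℤ × ℤ)) (y : ℤ) : ℤ :=
  if h : (rowSet S y).Nonempty then (rowSet S y).min' h else 0

lemma topY_spec {S : Finset (ℤ × ℤ)} {x : ℤ} (h : ∃ y, (x, y) ∈ S) :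
    (x, topY S x) ∈ S ∧ (x, topY S x + 1) ∉ S := by
  obtain ⟨y, hy⟩ := h
  have hne : (colSet S x).Nonempty := ⟨y, mem_colSet.mpr hy⟩
  rw [topY, dif_pos hne]
  refine ⟨mem_colSet.mp ((colSet S x).max'_mem hne), fun hc => ?_⟩
  have := (colSet S x).le_max' _ (mem_colSet.mpr hc)
  omega

lemma botY_spec {S : Finset (ℤ × ℤ)} {x : ℤ} (h : ∃ y, (x, y) ∈ S) :
    (x, botY S x) ∈ S ∧ (x, botY S x - 1) ∉ S := by
  obtain ⟨y, hy⟩ := h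
  have hne : (colSet S x).Nonempty := ⟨y, mem_colSet.mpr hy⟩
  rw [botY, dif_pos hne]
  refine ⟨mem_colSet.mp ((colSet S x).min'_mem hne), fun hc => ?_⟩
  have := (colSet S x).min'_le _ (mem_colSet.mpr hc)
  omega

lemma rightX_spec {S : Finset (ℤ × ℤ)} {y : ℤ} (h : ∃ x, (x, y) ∈ S) :
    (rightX S y, y) ∈ S ∧ (rightX S y + 1, y) ∉ S := by
  obtain ⟨x, hx⟩ := h
  have hne : (rowSet S y).Nonempty := ⟨x, mem_rowSet.mpr hx⟩
  rw [rightX, dif_pos hne]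
  refine ⟨mem_rowSet.mp ((rowSet S y).max'_mem hne), fun hc => ?_⟩
  have := (rowSet S y).le_max' _ (mem_rowSet.mpr hc)
  omega

lemma leftX_spec {S : Finset (ℤ × ℤ)} {y : ℤ} (h : ∃ x, (x, y) ∈ S) :
    (leftX S y, y) ∈ S ∧ (leftX S y - 1, y) ∉ S := by
  obtain ⟨x, hx⟩ := h
  have hne : (rowSet S y).Nonempty := ⟨x, mem_rowSet.mpr hx⟩
  rw [leftX, dif_pos hne]
  refine ⟨mem_rowSet.mp ((rowSet S y).min'_mem hne), fun hc => ?_⟩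
  have := (rowSet S y).min'_le _ (mem_rowSet.mpr hc)
  omega

set_option maxHeartbeats 400000 in
/-- For a finite nonempty connected set `S` with bounding box of
width `w` and height `h`, the perimeter of `S` is at least `2(w + h)`; in
particular, a connected set containing two cells whose first coordinates differ
by at least 8 has perimeter at least 20. -/
theorem perimeter_ge_boundingBox (S : Finset (ℤ × ℤ)) (hS : S.Nonempty)
    (hconn : Conn S) :
    2 * (((S.image Prod.fst).max' (hS.image Prod.fst) -
            (S.image Prod.fst).min' (hS.image Prod.fst) + 1) +
         ((S.image Prod.snd).max' (hS.image Prod.snd) -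
            (S.image Prod.snd).min' (hS.image Prod.snd) + 1))
      ≤ (perimeter S : ℤ) ∧
    (∀ a ∈ S, ∀ b ∈ S, 8 ≤ |a.1 - b.1| → 20 ≤ perimeter S) := by
  classical
  set m1 := (S.image Prod.fst).min' (hS.image Prod.fst) with hm1
  set M1 := (S.image Prod.fst).max' (hS.image Prod.fst) with hM1
  set m2 := (S.image Prod.snd).min' (hS.image Prod.snd) with hm2
  set M2 := (S.image Prod.snd).max' (hS.image Prod.snd) with hM2
  -- bounds on coordinates of members
  have hbound1 : ∀ c ∈ S, m1 ≤ c.1 ∧ c.1 ≤ M1 := fun c hc =>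
    ⟨Finset.min'_le _ _ (Finset.mem_image_of_mem Prod.fst hc),
     Finset.le_max' _ _ (Finset.mem_image_of_mem Prod.fst hc)⟩
  have hbound2 : ∀ c ∈ S, m2 ≤ c.2 ∧ c.2 ≤ M2 := fun c hc =>
    ⟨Finset.min'_le _ _ (Finset.mem_image_of_mem Prod.snd hc),
     Finset.le_max' _ _ (Finset.mem_image_of_mem Prod.snd hc)⟩
  -- witnesses for the extremes
  obtain ⟨a0, ha0, ha0x⟩ := Finset.mem_image.mp ((S.image Prod.fst).min'_mem (hS.image Prod.fst))
  obtain ⟨b0, hb0, hb0x⟩ := Finset.mem_image.mp ((S.image Prod.fst).max'_mem (hS.image Prod.fst))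
  obtain ⟨c0, hc0, hc0y⟩ := Finset.mem_image.mp ((S.image Prod.snd).min'_mem (hS.image Prod.snd))
  obtain ⟨d0, hd0, hd0y⟩ := Finset.mem_image.mp ((S.image Prod.snd).max'_mem (hS.image Prod.snd))
  have hm1M1 : m1 ≤ M1 := (hbound1 a0 ha0).1.trans (ha0x ▸ (hbound1 a0 ha0).2)
  have hm2M2 : m2 ≤ M2 := (hbound2 c0 hc0).1.trans (hc0y ▸ (hbound2 c0 hc0).2)
  -- every column in range is hit
  have hcol : ∀ x, m1 ≤ x → x ≤ M1 → ∃ y, (x, y) ∈ S := by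
    intro x hx1 hx2
    obtain ⟨k, f, hf0, hfk, hmem, hadj⟩ := hconn a0 ha0 b0 hb0
    obtain ⟨i, hik, hix⟩ := ivt (fun i => (f i).1) k
      (fun i hi => (adj_step (hadj i hi)).1) x
      (by simp only [hf0]; omega) (by simp only [hfk]; omega)
    refine ⟨(f i).2, ?_⟩
    have : f i = (x, (f i).2) := by rw [← hix]
    rw [← this]; exact hmem i hik
  have hrow : ∀ y, m2 ≤ y → y ≤ M2 → ∃ x, (x, y) ∈ S := by
    intro y hy1 hy2
    obtain ⟨k, f, hf0, hfk, hmem, hadj⟩ := hconn c0 hc0 d0 hd0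
    obtain ⟨i, hik, hiy⟩ := ivt (fun i => (f i).2) k
      (fun i hi => (adj_step (hadj i hi)).2) y
      (by simp only [hf0]; omega) (by simp only [hfk]; omega)
    refine ⟨(f i).1, ?_⟩
    have : f i = ((f i).1, y) := by rw [← hiy]
    rw [← this]; exact hmem i hik
  -- the boundary set
  set B : Set ((ℤ × ℤ) × (ℤ × ℤ)) :=
    {p : (ℤ × ℤ) × (ℤ × ℤ) | p.1 ∈ S ∧ p.2 ∉ S ∧ Adj p.1 p.2} with hB
  have hperi : perimeter S = B.ncard := rfl
  -- B is finite
  set T : Finset (ℤ × ℤ) :=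
    S.image (· + ((1:ℤ), (0:ℤ))) ∪ S.image (· + (-1, 0)) ∪
    S.image (· + (0, 1)) ∪ S.image (· + (0, -1)) with hT
  have hBfin : B.Finite := by
    apply Set.Finite.subset (S ×ˢ T).finite_toSet
    rintro ⟨c, d⟩ ⟨h1, h2, h3⟩
    dsimp only at h1 h2 h3
    simp only [Finset.coe_product, Set.mem_prod, Finset.mem_coe]
    refine ⟨h1, ?_⟩
    have e1 := Finset.mem_image_of_mem (· + ((1:ℤ), (0:ℤ))) h1
    have e2 := Finset.mem_image_of_mem (· + ((-1:ℤ), (0:ℤ))) h1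
    have e3 := Finset.mem_image_of_mem (· + ((0:ℤ), (1:ℤ))) h1
    have e4 := Finset.mem_image_of_mem (· + ((0:ℤ), (-1:ℤ))) h1
    rcases adj_cases h3 with h | h | h | h <;> subst h <;>
      simp only [hT, Finset.mem_union] <;> tauto
  -- the injection
  set F : ℤ × Fin 4 → (ℤ × ℤ) × (ℤ × ℤ) := fun p =>
    if p.2 = 0 then ((p.1, topY S p.1), (p.1, topY S p.1 + 1))
    else if p.2 = 1 then ((p.1, botY S p.1), (p.1, botY S p.1 - 1))
    else if p.2 = 2 then ((rightX S p.1, p.1), (rightX S p.1 + 1, p.1))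
    else ((leftX S p.1, p.1), (leftX S p.1 - 1, p.1)) with hF
  set D : Finset (ℤ × Fin 4) :=
    (Finset.Icc m1 M1 ×ˢ ({0, 1} : Finset (Fin 4))) ∪
    (Finset.Icc m2 M2 ×ˢ ({2, 3} : Finset (Fin 4))) with hD
  have himg : ∀ p ∈ D, F p ∈ B := by
    rintro ⟨z, i⟩ hp
    simp only [hD, Finset.mem_union, Finset.mem_product, Finset.mem_Icc,
      Finset.mem_insert, Finset.mem_singleton] at hp
    fin_cases i
    · have hz : m1 ≤ z ∧ z ≤ M1 := by
        rcases hp with ⟨h, _⟩ | ⟨_, h | h⟩ <;> simp_all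
      obtain ⟨ht1, ht2⟩ := topY_spec (hcol z hz.1 hz.2)
      show ((z, topY S z), (z, topY S z + 1)) ∈ B
      exact ⟨ht1, ht2, adj_up z (topY S z)⟩
    · have hz : m1 ≤ z ∧ z ≤ M1 := by
        rcases hp with ⟨h, _⟩ | ⟨_, h | h⟩ <;> simp_all
      obtain ⟨ht1, ht2⟩ := botY_spec (hcol z hz.1 hz.2)
      show ((z, botY S z), (z, botY S z - 1)) ∈ B
      exact ⟨ht1, ht2, adj_down z (botY S z)⟩
    · have hz : m2 ≤ z ∧ z ≤ M2 := by
        rcases hp with ⟨_, h | h⟩ | ⟨h, _⟩ <;> first | exact h | exact absurd h (by decide)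
      obtain ⟨ht1, ht2⟩ := rightX_spec (hrow z hz.1 hz.2)
      show ((rightX S z, z), (rightX S z + 1, z)) ∈ B
      exact ⟨ht1, ht2, adj_right z (rightX S z)⟩
    · have hz : m2 ≤ z ∧ z ≤ M2 := by
        rcases hp with ⟨_, h | h⟩ | ⟨h, _⟩ <;> first | exact h | exact absurd h (by decide)
      obtain ⟨ht1, ht2⟩ := leftX_spec (hrow z hz.1 hz.2)
      show ((leftX S z, z), (leftX S z - 1, z)) ∈ B
      exact ⟨ht1, ht2, adj_left z (leftX S z)⟩
  set G : (ℤ × ℤ) × (ℤ × ℤ) → ℤ × Fin 4 := fun q =>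
    if q.2.2 = q.1.2 + 1 then (q.1.1, 0)
    else if q.2.2 = q.1.2 - 1 then (q.1.1, 1)
    else if q.2.1 = q.1.1 + 1 then (q.1.2, 2)
    else (q.1.2, 3) with hG
  have key : ∀ p : ℤ × Fin 4, G (F p) = p := by
    rintro ⟨z, i⟩
    fin_cases i
    · show G ((z, topY S z), (z, topY S z + 1)) = (z, 0)
      simp only [hG]; split_ifs <;> first | rfl | omega
    · show G ((z, botY S z), (z, botY S z - 1)) = (z, 1)
      simp only [hG]; split_ifs <;> first | rfl | omega
    · show G ((rightX S z, z), (rightX S z + 1, z)) = (z, 2)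
      simp only [hG]; split_ifs <;> first | rfl | omega
    · show G ((leftX S z, z), (leftX S z - 1, z)) = (z, 3)
      simp only [hG]; split_ifs <;> first | rfl | omega
  have hinj : Set.InjOn F ↑D := fun p _ q _ h => by
    rw [← key p, ← key q, h]
  -- cardinality count
  have hdisj : Disjoint (Finset.Icc m1 M1 ×ˢ ({0, 1} : Finset (Fin 4)))
      (Finset.Icc m2 M2 ×ˢ ({2, 3} : Finset (Fin 4))) := by
    rw [Finset.disjoint_left]
    rintro ⟨z, i⟩ h1 h2
    simp only [Finset.mem_product, Finset.mem_insert, Finset.mem_singleton] at h1 h2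
    fin_cases i <;> obtain ⟨_, h1 | h1⟩ := h1 <;> obtain ⟨_, h2 | h2⟩ := h2 <;>
      exact absurd (h1.symm.trans h2) (by decide)
  have hDcard : D.card = (Finset.Icc m1 M1).card * 2 + (Finset.Icc m2 M2).card * 2 := by
    rw [hD, Finset.card_union_of_disjoint hdisj, Finset.card_product, Finset.card_product,
      show ({0, 1} : Finset (Fin 4)).card = 2 from by decide,
      show ({2, 3} : Finset (Fin 4)).card = 2 from by decide]
  have hc1 : ((Finset.Icc m1 M1).card : ℤ) = M1 + 1 - m1 := by
    rw [Int.card_Icc]; exact Int.toNat_of_nonneg (by omega)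
  have hc2 : ((Finset.Icc m2 M2).card : ℤ) = M2 + 1 - m2 := by
    rw [Int.card_Icc]; exact Int.toNat_of_nonneg (by omega)
  have hle : D.card ≤ perimeter S := by
    rw [hperi]
    calc D.card = (↑D : Set (ℤ × Fin 4)).ncard := (Set.ncard_coe_finset D).symm
      _ = (F '' ↑D).ncard := (Set.ncard_image_of_injOn hinj).symm
      _ ≤ B.ncard := Set.ncard_le_ncard (by rintro _ ⟨p, hp, rfl⟩; exact himg p hp) hBfin
  have hle' : (D.card : ℤ) ≤ (perimeter S : ℤ) := by exact_mod_cast hle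
  have hDcard' : (D.card : ℤ) = ((Finset.Icc m1 M1).card : ℤ) * 2 + ((Finset.Icc m2 M2).card : ℤ) * 2 := by
    exact_mod_cast hDcard
  have part1 : 2 * ((M1 - m1 + 1) + (M2 - m2 + 1)) ≤ (perimeter S : ℤ) := by omega
  refine ⟨part1, ?_⟩
  intro a ha b hb hab
  have h1 := hbound1 a ha
  have h2 := hbound1 b hb
  have : (20 : ℤ) ≤ (perimeter S : ℤ) := by
    rcases abs_cases (a.1 - b.1) with h | h <;> omega
  exact_mod_cast this
end

section
/- Let G ⊆ ℤ × ℤ be a finite nonempty set of cells and let N ⊆ G be a set of numbered cells, each carrying the number 4. Then there exists a Knossos solution for (G, N) — that is, a partition of G into finitely many nonempty connected rooms such that every room contains exactly one cell of N and every room has perimeter equal to the number 4 inscribed in its numbered cell — if and only if N = G; in that case the unique such solution is the partition of G into singletons. -/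
/-- A Knossos solution for a grid `G` with numbered cells `N`, all carrying the
number 4: a partition of `G` into finitely many nonempty connected rooms, each
containing exactly one numbered cell and having perimeter 4. -/
def IsKnossosSolution4 (G N : Finset (ℤ × ℤ)) (P : Finset (Finset (ℤ × ℤ))) : Prop :=
  (∀ R ∈ P, R.Nonempty ∧ Conn R ∧ (R ∩ N).card = 1 ∧ perimeter R = 4) ∧
  (∀ R ∈ P, ∀ R' ∈ P, R ≠ R' → Disjoint R R') ∧
  (∀ c : ℤ × ℤ, c ∈ G ↔ ∃ R ∈ P, c ∈ R)

def nbrs (c : ℤ × ℤ) : Finset (ℤ × ℤ) :=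
  {(c.1 + 1, c.2), (c.1 - 1, c.2), (c.1, c.2 + 1), (c.1, c.2 - 1)}

lemma adj_iff_nbrs (c d : ℤ × ℤ) : Adj c d ↔ d ∈ nbrs c := by
  simp only [Adj, nbrs, Finset.mem_insert, Finset.mem_singleton, Prod.ext_iff]
  rw [Int.abs_eq_natAbs, Int.abs_eq_natAbs]
  omega

lemma adj_ne {c d : ℤ × ℤ} (h : Adj c d) : d ≠ c := by
  rintro rfl
  simp [Adj] at h

lemma bfin (S : Finset (ℤ × ℤ)) :
    {p : (ℤ × ℤ) × (ℤ × ℤ) | p.1 ∈ S ∧ p.2 ∉ S ∧ Adj p.1 p.2}.Finite := by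
  apply Set.Finite.subset (S ×ˢ S.biUnion nbrs).finite_toSet
  rintro ⟨c, d⟩ ⟨h1, h2, h3⟩
  simp only [Finset.coe_product, Set.mem_prod, Finset.mem_coe, Finset.mem_biUnion]
  exact ⟨h1, c, h1, (adj_iff_nbrs c d).mp h3⟩

lemma nbrs_card (c : ℤ × ℤ) : (nbrs c).card = 4 := by
  rw [nbrs, Finset.card_insert_of_notMem, Finset.card_insert_of_notMem,
    Finset.card_insert_of_notMem, Finset.card_singleton] <;>
    simp [Prod.ext_iff] <;> omega

lemma perimeter_singleton (c : ℤ × ℤ) : perimeter {c} = 4 := by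
  have hset : {p : (ℤ × ℤ) × (ℤ × ℤ) | p.1 ∈ ({c} : Finset (ℤ × ℤ)) ∧
      p.2 ∉ ({c} : Finset (ℤ × ℤ)) ∧ Adj p.1 p.2} =
      ↑(({c} : Finset (ℤ × ℤ)) ×ˢ nbrs c) := by
    ext ⟨a, b⟩
    simp only [Set.mem_setOf_eq, Finset.coe_product, Set.mem_prod, Finset.mem_coe,
      Finset.mem_singleton]
    constructor
    · rintro ⟨h1, h2, h3⟩
      rw [h1] at h3
      exact ⟨h1, (adj_iff_nbrs c b).mp h3⟩
    · rintro ⟨h1, hb⟩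
      have hadj := (adj_iff_nbrs c b).mpr hb
      refine ⟨h1, ?_, by rw [h1]; exact hadj⟩
      intro h
      exact adj_ne hadj h
  rw [perimeter, hset, Set.ncard_coe_finset, Finset.card_product, Finset.card_singleton,
    nbrs_card]

lemma int_succ {T : Finset ℤ} {x : ℤ} (hx : x ∈ T) : ∃ m ∈ T, m + 1 ∉ T := by
  refine ⟨T.max' ⟨x, hx⟩, T.max'_mem _, fun h => ?_⟩
  have := T.le_max' _ h
  omega

lemma int_pred {T : Finset ℤ} {x : ℤ} (hx : x ∈ T) : ∃ m ∈ T, m - 1 ∉ T := by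
  refine ⟨T.min' ⟨x, hx⟩, T.min'_mem _, fun h => ?_⟩
  have := T.min'_le _ h
  omega

lemma row_mem (S : Finset (ℤ × ℤ)) (y : ℤ) :
    ∀ z : ℤ, z ∈ (S.filter (fun c => c.2 = y)).image Prod.fst ↔ (z, y) ∈ S := by
  intro z
  simp only [Finset.mem_image, Finset.mem_filter]
  constructor
  · rintro ⟨c, ⟨hc, hc2⟩, hc1⟩
    have : c = (z, y) := by
      ext <;> simp [hc1, hc2]
    rwa [this] at hc
  · intro h
    exact ⟨(z, y), ⟨h, rfl⟩, rfl⟩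

lemma col_mem (S : Finset (ℤ × ℤ)) (x : ℤ) :
    ∀ z : ℤ, z ∈ (S.filter (fun c => c.1 = x)).image Prod.snd ↔ (x, z) ∈ S := by
  intro z
  simp only [Finset.mem_image, Finset.mem_filter]
  constructor
  · rintro ⟨c, ⟨hc, hc2⟩, hc1⟩
    have : c = (x, z) := by
      ext <;> simp [hc1, hc2]
    rwa [this] at hc
  · intro h
    exact ⟨(x, z), ⟨h, rfl⟩, rfl⟩

lemma ex_row_succ {S : Finset (ℤ × ℤ)} {x y : ℤ} (h : (x, y) ∈ S) :
    ∃ m, (m, y) ∈ S ∧ (m + 1, y) ∉ S := by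
  obtain ⟨m, hm, hm1⟩ := int_succ ((row_mem S y x).mpr h)
  exact ⟨m, (row_mem S y m).mp hm, fun hc => hm1 ((row_mem S y _).mpr hc)⟩

lemma ex_row_pred {S : Finset (ℤ × ℤ)} {x y : ℤ} (h : (x, y) ∈ S) :
    ∃ m, (m, y) ∈ S ∧ (m - 1, y) ∉ S := by
  obtain ⟨m, hm, hm1⟩ := int_pred ((row_mem S y x).mpr h)
  exact ⟨m, (row_mem S y m).mp hm, fun hc => hm1 ((row_mem S y _).mpr hc)⟩

lemma ex_col_succ {S : Finset (ℤ × ℤ)} {x y : ℤ} (h : (x, y) ∈ S) :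
    ∃ m, (x, m) ∈ S ∧ (x, m + 1) ∉ S := by
  obtain ⟨m, hm, hm1⟩ := int_succ ((col_mem S x y).mpr h)
  exact ⟨m, (col_mem S x m).mp hm, fun hc => hm1 ((col_mem S x _).mpr hc)⟩

lemma ex_col_pred {S : Finset (ℤ × ℤ)} {x y : ℤ} (h : (x, y) ∈ S) :
    ∃ m, (x, m) ∈ S ∧ (x, m - 1) ∉ S := by
  obtain ⟨m, hm, hm1⟩ := int_pred ((col_mem S x y).mpr h)
  exact ⟨m, (col_mem S x m).mp hm, fun hc => hm1 ((col_mem S x _).mpr hc)⟩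

lemma adj_of_horiz {x x' y : ℤ} (h : x' = x + 1 ∨ x' = x - 1) : Adj (x, y) (x', y) := by
  show |x - x'| + |y - y| = 1
  rw [Int.abs_eq_natAbs, Int.abs_eq_natAbs]
  omega

lemma adj_of_vert {x y y' : ℤ} (h : y' = y + 1 ∨ y' = y - 1) : Adj (x, y) (x, y') := by
  show |x - x| + |y - y'| = 1
  rw [Int.abs_eq_natAbs, Int.abs_eq_natAbs]
  omega

lemma five_le_of_two_rows {S : Finset (ℤ × ℤ)} {a b : ℤ × ℤ}
    (ha : a ∈ S) (hb : b ∈ S) (hne : a.2 ≠ b.2) : 5 ≤ perimeter S := by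
  obtain ⟨x1, h1a, h1b⟩ := ex_row_succ (x := a.1) (y := a.2) ha
  obtain ⟨x2, h2a, h2b⟩ := ex_row_pred (x := a.1) (y := a.2) ha
  obtain ⟨x3, h3a, h3b⟩ := ex_row_succ (x := b.1) (y := b.2) hb
  obtain ⟨x4, h4a, h4b⟩ := ex_row_pred (x := b.1) (y := b.2) hb
  obtain ⟨y5, h5a, h5b⟩ := ex_col_succ (x := a.1) (y := a.2) ha
  set p1 : (ℤ × ℤ) × (ℤ × ℤ) := ((x1, a.2), (x1 + 1, a.2)) with hp1
  set p2 : (ℤ × ℤ) × (ℤ × ℤ) := ((x2, a.2), (x2 - 1, a.2)) with hp2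
  set p3 : (ℤ × ℤ) × (ℤ × ℤ) := ((x3, b.2), (x3 + 1, b.2)) with hp3
  set p4 : (ℤ × ℤ) × (ℤ × ℤ) := ((x4, b.2), (x4 - 1, b.2)) with hp4
  set p5 : (ℤ × ℤ) × (ℤ × ℤ) := ((a.1, y5), (a.1, y5 + 1)) with hp5
  have hsub : ↑({p1, p2, p3, p4, p5} : Finset ((ℤ × ℤ) × (ℤ × ℤ))) ⊆
      {p : (ℤ × ℤ) × (ℤ × ℤ) | p.1 ∈ S ∧ p.2 ∉ S ∧ Adj p.1 p.2} := by
    intro p hp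
    simp only [Finset.coe_insert, Set.mem_insert_iff, Finset.coe_singleton,
      Set.mem_singleton_iff] at hp
    rcases hp with rfl | rfl | rfl | rfl | rfl
    · exact ⟨h1a, h1b, adj_of_horiz (Or.inl rfl)⟩
    · exact ⟨h2a, h2b, adj_of_horiz (Or.inr rfl)⟩
    · exact ⟨h3a, h3b, adj_of_horiz (Or.inl rfl)⟩
    · exact ⟨h4a, h4b, adj_of_horiz (Or.inr rfl)⟩
    · exact ⟨h5a, h5b, adj_of_vert (Or.inl rfl)⟩
  have hcard : ({p1, p2, p3, p4, p5} : Finset ((ℤ × ℤ) × (ℤ × ℤ))).card = 5 := by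
    rw [Finset.card_insert_of_notMem, Finset.card_insert_of_notMem,
      Finset.card_insert_of_notMem, Finset.card_insert_of_notMem,
      Finset.card_singleton] <;>
      simp only [hp1, hp2, hp3, hp4, hp5, Finset.mem_insert, Finset.mem_singleton,
        Prod.ext_iff, not_or, Prod.mk.injEq] <;> omega
  calc 5 = ({p1, p2, p3, p4, p5} : Finset ((ℤ × ℤ) × (ℤ × ℤ))).card := hcard.symm
    _ = Set.ncard ↑({p1, p2, p3, p4, p5} : Finset ((ℤ × ℤ) × (ℤ × ℤ))) :=
        (Set.ncard_coe_finset _).symm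
    _ ≤ perimeter S := Set.ncard_le_ncard hsub (bfin S)

lemma five_le_of_two_cols {S : Finset (ℤ × ℤ)} {a b : ℤ × ℤ}
    (ha : a ∈ S) (hb : b ∈ S) (hne : a.1 ≠ b.1) : 5 ≤ perimeter S := by
  obtain ⟨y1, h1a, h1b⟩ := ex_col_succ (x := a.1) (y := a.2) ha
  obtain ⟨y2, h2a, h2b⟩ := ex_col_pred (x := a.1) (y := a.2) ha
  obtain ⟨y3, h3a, h3b⟩ := ex_col_succ (x := b.1) (y := b.2) hb
  obtain ⟨y4, h4a, h4b⟩ := ex_col_pred (x := b.1) (y := b.2) hb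
  obtain ⟨x5, h5a, h5b⟩ := ex_row_succ (x := a.1) (y := a.2) ha
  set p1 : (ℤ × ℤ) × (ℤ × ℤ) := ((a.1, y1), (a.1, y1 + 1)) with hp1
  set p2 : (ℤ × ℤ) × (ℤ × ℤ) := ((a.1, y2), (a.1, y2 - 1)) with hp2
  set p3 : (ℤ × ℤ) × (ℤ × ℤ) := ((b.1, y3), (b.1, y3 + 1)) with hp3
  set p4 : (ℤ × ℤ) × (ℤ × ℤ) := ((b.1, y4), (b.1, y4 - 1)) with hp4
  set p5 : (ℤ × ℤ) × (ℤ × ℤ) := ((x5, a.2), (x5 + 1, a.2)) with hp5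
  have hsub : ↑({p1, p2, p3, p4, p5} : Finset ((ℤ × ℤ) × (ℤ × ℤ))) ⊆
      {p : (ℤ × ℤ) × (ℤ × ℤ) | p.1 ∈ S ∧ p.2 ∉ S ∧ Adj p.1 p.2} := by
    intro p hp
    simp only [Finset.coe_insert, Set.mem_insert_iff, Finset.coe_singleton,
      Set.mem_singleton_iff] at hp
    rcases hp with rfl | rfl | rfl | rfl | rfl
    · exact ⟨h1a, h1b, adj_of_vert (Or.inl rfl)⟩
    · exact ⟨h2a, h2b, adj_of_vert (Or.inr rfl)⟩
    · exact ⟨h3a, h3b, adj_of_vert (Or.inl rfl)⟩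
    · exact ⟨h4a, h4b, adj_of_vert (Or.inr rfl)⟩
    · exact ⟨h5a, h5b, adj_of_horiz (Or.inl rfl)⟩
  have hcard : ({p1, p2, p3, p4, p5} : Finset ((ℤ × ℤ) × (ℤ × ℤ))).card = 5 := by
    rw [Finset.card_insert_of_notMem, Finset.card_insert_of_notMem,
      Finset.card_insert_of_notMem, Finset.card_insert_of_notMem,
      Finset.card_singleton] <;>
      simp only [hp1, hp2, hp3, hp4, hp5, Finset.mem_insert, Finset.mem_singleton,
        Prod.ext_iff, not_or, Prod.mk.injEq] <;> omega
  calc 5 = ({p1, p2, p3, p4, p5} : Finset ((ℤ × ℤ) × (ℤ × ℤ))).card := hcard.symm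
    _ = Set.ncard ↑({p1, p2, p3, p4, p5} : Finset ((ℤ × ℤ) × (ℤ × ℤ))) :=
        (Set.ncard_coe_finset _).symm
    _ ≤ perimeter S := Set.ncard_le_ncard hsub (bfin S)

lemma eq_singleton_of_perimeter_four {S : Finset (ℤ × ℤ)} (hS : S.Nonempty)
    (h4 : perimeter S = 4) : ∃ c, S = {c} := by
  obtain ⟨a, ha⟩ := hS
  refine ⟨a, ?_⟩
  by_contra h
  have hb : ∃ b ∈ S, b ≠ a := by
    by_contra hc
    push_neg at hc
    exact h (Finset.eq_singleton_iff_unique_mem.mpr ⟨ha, hc⟩)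
  obtain ⟨b, hb, hba⟩ := hb
  have : a.1 ≠ b.1 ∨ a.2 ≠ b.2 := by
    by_contra hc
    push_neg at hc
    exact hba (Prod.ext hc.1 hc.2).symm
  rcases this with h' | h'
  · have := five_le_of_two_cols ha hb h'
    omega
  · have := five_le_of_two_rows ha hb h'
    omega

/-- For a finite nonempty grid `G` and numbered cells `N ⊆ G`
all carrying the number 4, a Knossos solution exists iff `N = G`, and any
solution is the partition of `G` into singletons. -/
theorem knossos_all_fours (G : Finset (ℤ × ℤ)) (hG : G.Nonempty)
    (N : Finset (ℤ × ℤ)) (hN : N ⊆ G) :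
    ((∃ P : Finset (Finset (ℤ × ℤ)), IsKnossosSolution4 G N P) ↔ N = G) ∧
    (∀ P : Finset (Finset (ℤ × ℤ)), IsKnossosSolution4 G N P →
      P = G.image (fun c => ({c} : Finset (ℤ × ℤ)))) := by
  constructor
  · constructor
    · rintro ⟨P, hrooms, hdisj, hcov⟩
      refine Finset.Subset.antisymm hN (fun c hc => ?_)
      obtain ⟨R, hR, hcR⟩ := (hcov c).mp hc
      obtain ⟨hne, _, hcard, hperi⟩ := hrooms R hR
      obtain ⟨d, rfl⟩ := eq_singleton_of_perimeter_four hne hperi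
      have hcd : c = d := Finset.mem_singleton.mp hcR
      subst hcd
      by_contra hcN
      rw [Finset.singleton_inter_of_notMem hcN] at hcard
      simp at hcard
    · rintro rfl
      refine ⟨N.image (fun c => ({c} : Finset (ℤ × ℤ))), ?_, ?_, ?_⟩
      · intro R hR
        obtain ⟨c, hc, rfl⟩ := Finset.mem_image.mp hR
        refine ⟨Finset.singleton_nonempty c, ?_, ?_, perimeter_singleton c⟩
        · intro a ha b hb
          have ha' : a = c := Finset.mem_singleton.mp ha
          have hb' : b = c := Finset.mem_singleton.mp hb
          exact ⟨0, fun _ => a, rfl, by rw [ha', hb'], fun i _ => ha,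
            fun i hi => absurd hi (Nat.not_lt_zero i)⟩
        · rw [Finset.singleton_inter_of_mem hc, Finset.card_singleton]
      · intro R hR R' hR' hne
        obtain ⟨c, _, rfl⟩ := Finset.mem_image.mp hR
        obtain ⟨c', _, rfl⟩ := Finset.mem_image.mp hR'
        rw [Finset.disjoint_singleton]
        intro h
        exact hne (by rw [h])
      · intro c
        constructor
        · intro hc
          exact ⟨{c}, Finset.mem_image.mpr ⟨c, hc, rfl⟩, Finset.mem_singleton_self c⟩
        · rintro ⟨R, hR, hcR⟩
          obtain ⟨d, hd, rfl⟩ := Finset.mem_image.mp hR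
          rwa [Finset.mem_singleton.mp hcR]
  · rintro P ⟨hrooms, hdisj, hcov⟩
    ext R
    rw [Finset.mem_image]
    constructor
    · intro hR
      obtain ⟨hne, _, _, hperi⟩ := hrooms R hR
      obtain ⟨c, rfl⟩ := eq_singleton_of_perimeter_four hne hperi
      exact ⟨c, (hcov c).mpr ⟨{c}, hR, Finset.mem_singleton_self c⟩, rfl⟩
    · rintro ⟨c, hc, rfl⟩
      obtain ⟨R, hR, hcR⟩ := (hcov c).mp hc
      obtain ⟨hne, _, _, hperi⟩ := hrooms R hR
      obtain ⟨d, rfl⟩ := eq_singleton_of_perimeter_four hne hperi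
      have : c = d := Finset.mem_singleton.mp hcR
      subst this
      exact hR
end
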